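/- arXiv:2504.15810 — 3 statements merged into one kernel-verified Lean document; each statement's English description precedes it below -/
import Mathlib

section
/- For every natural number $m$, $\sum_{\ell=0}^{m} \binom{m}{\ell}\, (\ell+2)!\, (m-\ell+2)! = \frac{(m+5)!}{30}$. -/
open Nat

/-- `∑_{ℓ=0}^m C(m,ℓ) (ℓ+2)! (m-ℓ+2)! = (m+5)!/30`. -/
theorem sum_choose_factorial_add_two (m : ℕ) :
    ∑ ℓ ∈ Finset.range (m + 1), ((m.choose ℓ : ℚ) * (ℓ + 2)! * (m - ℓ + 2)!)
      = ((m + 5)! : ℚ) / 30 := by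
  induction m with
  | zero => norm_num [Nat.factorial]
  | succ m ih =>
    have key : ∑ ℓ ∈ Finset.range (m + 1 + 1), (((m+1).choose ℓ : ℚ) * (ℓ + 2)! * (m + 1 - ℓ + 2)!)
        = ((m : ℚ) + 6) * ∑ ℓ ∈ Finset.range (m + 1), ((m.choose ℓ : ℚ) * (ℓ + 2)! * (m - ℓ + 2)!) := by
      -- combined RHS form
      have hAB : ∑ i ∈ Finset.range (m + 1), ((m.choose i : ℚ) * (i + 2)! * (m - i + 3)!)
          + ∑ i ∈ Finset.range (m + 1), ((m.choose i : ℚ) * (i + 3)! * (m - i + 2)!)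
          = ((m : ℚ) + 6) * ∑ ℓ ∈ Finset.range (m + 1), ((m.choose ℓ : ℚ) * (ℓ + 2)! * (m - ℓ + 2)!) := by
        rw [Finset.mul_sum, ← Finset.sum_add_distrib]
        refine Finset.sum_congr rfl fun i hi => ?_
        have hi' : i ≤ m := Nat.lt_succ_iff.mp (Finset.mem_range.mp hi)
        have h1 : (m - i + 3)! = (m - i + 3) * (m - i + 2)! := rfl
        have h2 : (i + 3)! = (i + 3) * (i + 2)! := rfl
        rw [h1, h2]
        push_cast [Nat.cast_sub hi']
        ring
      rw [← hAB]
      rw [Finset.sum_range_succ']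
      have hshift : ∀ i ∈ Finset.range (m + 1),
          (((m+1).choose (i+1) : ℚ) * ((i+1) + 2)! * (m + 1 - (i+1) + 2)!)
          = ((m.choose i : ℚ) * (i + 3)! * (m - i + 2)!)
            + ((m.choose (i+1) : ℚ) * (i + 3)! * (m - i + 2)!) := by
        intro i hi
        rw [Nat.choose_succ_succ, Nat.succ_sub_succ]
        push_cast
        ring
      rw [Finset.sum_congr rfl hshift, Finset.sum_add_distrib]
      have hA : ∑ i ∈ Finset.range (m + 1), ((m.choose (i+1) : ℚ) * (i + 3)! * (m - i + 2)!)
          + (((m+1).choose 0 : ℚ) * (0 + 2)! * (m + 1 - 0 + 2)!)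
          = ∑ i ∈ Finset.range (m + 1), ((m.choose i : ℚ) * (i + 2)! * (m - i + 3)!) := by
        rw [Finset.sum_range_succ (fun i => ((m.choose (i+1) : ℚ) * (i + 3)! * (m - i + 2)!))]
        simp only [Nat.choose_succ_self, Nat.cast_zero, zero_mul, add_zero]
        rw [Finset.sum_range_succ' (fun i => ((m.choose i : ℚ) * (i + 2)! * (m - i + 3)!))]
        congr 1
        · refine Finset.sum_congr rfl fun i hi => ?_
          have hi' : i < m := Finset.mem_range.mp hi
          have : m - (i + 1) + 3 = m - i + 2 := by omega
          rw [this]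
        · simp
      linarith [hA]
    rw [key, ih]
    have h5 : ((m + 1 + 5)! : ℚ) = ((m : ℚ) + 6) * (m + 5)! := by
      have : m + 1 + 5 = (m + 5) + 1 := by omega
      rw [this, Nat.factorial_succ]
      push_cast
      ring
    rw [h5]
    ring
end

section
/- Let $c>0$, $b \ge 0$, and let $(A_n)_{n\ge 0}$, $(B_n)_{n\ge 0}$ be sequences of nonnegative reals satisfying $A_n \le \sum_{k=1}^{n} \binom{n}{k} c^k b\, A_{n-k} + B_n$ for all $n \ge 0$ (including $n=0$, where the sum is empty). Then for all $n$, $A_n \le \sum_{m=0}^{n} c^{m} \binom{n}{m} B_{n-m} \sum_{\ell=0}^{m} \ell!\, b^{\ell}\, S(m,\ell)$, where $S(m,\ell)$ are Stirling numbers of the second kind. -/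
/-- Stirling numbers of the second kind. -/
def stirling2 : ℕ → ℕ → ℕ
  | 0, 0 => 1
  | 0, _ + 1 => 0
  | _ + 1, 0 => 0
  | n + 1, k + 1 => (k + 1) * stirling2 n (k + 1) + stirling2 n k

lemma stirling2_eq_zero : ∀ {m ℓ : ℕ}, m < ℓ → stirling2 m ℓ = 0
  | 0, ℓ + 1, _ => rfl
  | m + 1, ℓ + 1, h => by
    rw [stirling2, stirling2_eq_zero (by omega), stirling2_eq_zero (by omega)]
    simp

lemma stirling2_sum : ∀ m ℓ : ℕ,
    ∑ j ∈ Finset.range (m + 1), m.choose j * stirling2 j ℓ = stirling2 (m + 1) (ℓ + 1)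
  | 0, ℓ => by cases ℓ <;> simp [stirling2]
  | m + 1, ℓ => by
    rw [Finset.sum_range_succ']
    have h1 : ∀ j ∈ Finset.range (m + 1),
        (m + 1).choose (j + 1) * stirling2 (j + 1) ℓ
          = m.choose j * stirling2 (j + 1) ℓ + m.choose (j + 1) * stirling2 (j + 1) ℓ := by
      intro j _
      rw [Nat.choose_succ_succ, Nat.add_mul]
    rw [Finset.sum_congr rfl h1, Finset.sum_add_distrib]
    have h2 : (∑ j ∈ Finset.range (m + 1), m.choose (j + 1) * stirling2 (j + 1) ℓ)
        + (m + 1).choose 0 * stirling2 0 ℓ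
        = ∑ j ∈ Finset.range (m + 2), m.choose j * stirling2 j ℓ := by
      conv_rhs => rw [Finset.sum_range_succ']
      simp
    have h3 : ∑ j ∈ Finset.range (m + 2), m.choose j * stirling2 j ℓ
        = stirling2 (m + 1) (ℓ + 1) := by
      rw [Finset.sum_range_succ, Nat.choose_succ_self, zero_mul, add_zero, stirling2_sum m ℓ]
    rw [add_assoc, h2, h3]
    cases ℓ with
    | zero =>
      have : ∀ j ∈ Finset.range (m + 1), m.choose j * stirling2 (j + 1) 0 = 0 := by
        intro j _; simp [stirling2]
      rw [Finset.sum_congr rfl this]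
      simp [stirling2]
    | succ k =>
      have : ∀ j ∈ Finset.range (m + 1), m.choose j * stirling2 (j + 1) (k + 1)
          = (k + 1) * (m.choose j * stirling2 j (k + 1)) + m.choose j * stirling2 j k := by
        intro j _; rw [stirling2]; ring
      rw [Finset.sum_congr rfl this, Finset.sum_add_distrib, ← Finset.mul_sum,
        stirling2_sum m (k + 1), stirling2_sum m k]
      show _ = stirling2 (m + 1 + 1) (k + 1 + 1)
      conv_rhs => rw [stirling2]
      ring
lemma stirling2_sum' (j ℓ : ℕ) :
    ∑ i ∈ Finset.range j, j.choose i * stirling2 i ℓ = (ℓ + 1) * stirling2 j (ℓ + 1) := by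
  have h := stirling2_sum j ℓ
  rw [Finset.sum_range_succ, Nat.choose_self, one_mul] at h
  have h2 : stirling2 (j + 1) (ℓ + 1) = (ℓ + 1) * stirling2 j (ℓ + 1) + stirling2 j ℓ := by
    rw [stirling2]
  omega

noncomputable def Tb (b : ℝ) (m : ℕ) : ℝ :=
  ∑ ℓ ∈ Finset.range (m + 1), (ℓ.factorial : ℝ) * b ^ ℓ * stirling2 m ℓ

lemma Tb_nonneg {b : ℝ} (hb : 0 ≤ b) (m : ℕ) : 0 ≤ Tb b m := by
  apply Finset.sum_nonneg
  intro ℓ _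
  positivity

lemma Tb_zero (b : ℝ) : Tb b 0 = 1 := by simp [Tb, stirling2]

lemma Tb_rec {b : ℝ} {j : ℕ} (hj : 1 ≤ j) :
    b * ∑ i ∈ Finset.range j, (j.choose i : ℝ) * Tb b i = Tb b j := by
  have key : ∀ i ∈ Finset.range j, (j.choose i : ℝ) * Tb b i
      = ∑ ℓ ∈ Finset.range j, (j.choose i : ℝ) * ((ℓ.factorial : ℝ) * b ^ ℓ * stirling2 i ℓ) := by
    intro i hi
    rw [Finset.mem_range] at hi
    rw [Tb, Finset.mul_sum]
    refine Finset.sum_subset (Finset.range_subset_range.2 (by omega)) ?_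
    intro ℓ _ hℓ
    rw [Finset.mem_range, not_lt] at hℓ
    rw [stirling2_eq_zero (show i < ℓ by omega)]
    simp
  rw [Finset.sum_congr rfl key, Finset.sum_comm]
  have key2 : ∀ ℓ ∈ Finset.range j,
      ∑ i ∈ Finset.range j, (j.choose i : ℝ) * ((ℓ.factorial : ℝ) * b ^ ℓ * stirling2 i ℓ)
      = (ℓ.factorial : ℝ) * b ^ ℓ * (((ℓ : ℝ) + 1) * stirling2 j (ℓ + 1)) := by
    intro ℓ _
    have hcast : (∑ i ∈ Finset.range j, (j.choose i : ℝ) * stirling2 i ℓ)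
        = ((ℓ : ℝ) + 1) * stirling2 j (ℓ + 1) := by exact_mod_cast stirling2_sum' j ℓ
    calc ∑ i ∈ Finset.range j, (j.choose i : ℝ) * ((ℓ.factorial : ℝ) * b ^ ℓ * stirling2 i ℓ)
        = (ℓ.factorial : ℝ) * b ^ ℓ * ∑ i ∈ Finset.range j, (j.choose i : ℝ) * stirling2 i ℓ := by
          rw [Finset.mul_sum]; apply Finset.sum_congr rfl; intro i _; ring
      _ = _ := by rw [hcast]
  rw [Finset.sum_congr rfl key2, Finset.mul_sum]
  obtain ⟨j', rfl⟩ : ∃ j', j = j' + 1 := ⟨j - 1, by omega⟩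
  conv_rhs => rw [Tb, Finset.sum_range_succ']
  have h0 : ((Nat.factorial 0 : ℕ) : ℝ) * b ^ 0 * ((stirling2 (j' + 1) 0 : ℕ) : ℝ) = 0 := by
    simp [stirling2]
  rw [h0, add_zero]
  apply Finset.sum_congr rfl
  intro ℓ _
  push_cast [Nat.factorial_succ]
  ring

lemma choose_split {n k m : ℕ} (hk : k ≤ n) (hm : k + m ≤ n) :
    n.choose k * (n - k).choose m = n.choose (k + m) * (k + m).choose m := by
  have h := Nat.choose_mul (n := n) (Nat.le_add_right k m)
  rw [Nat.add_sub_cancel_left] at h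
  have hsymm : (k + m).choose k = (k + m).choose m := by
    have h2 := Nat.choose_symm (Nat.le_add_left m k)
    simpa using h2
  rw [hsymm] at h
  omega

/-- One-dimensional recursive Gronwall-type bound: if nonnegative sequences `A`, `B`
satisfy `A n ≤ ∑_{k=1}^n C(n,k) c^k b A_{n-k} + B n` for all `n`, then
`A n ≤ ∑_{m=0}^n c^m C(n,m) B_{n-m} ∑_{ℓ=0}^m ℓ! b^ℓ S(m,ℓ)`. -/
theorem recursive_bound_stirling (c b : ℝ) (hc : 0 < c) (hb : 0 ≤ b)
    (A B : ℕ → ℝ) (hA : ∀ n, 0 ≤ A n) (hB : ∀ n, 0 ≤ B n)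
    (hrec : ∀ n : ℕ,
      A n ≤ (∑ k ∈ Finset.Icc 1 n, (n.choose k : ℝ) * c ^ k * b * A (n - k)) + B n) :
    ∀ n : ℕ,
      A n ≤ ∑ m ∈ Finset.range (n + 1), c ^ m * (n.choose m : ℝ) * B (n - m) *
        ∑ ℓ ∈ Finset.range (m + 1), (ℓ.factorial : ℝ) * b ^ ℓ * stirling2 m ℓ := by
  intro n
  induction n using Nat.strong_induction_on with
  | _ n ih =>
  show A n ≤ ∑ m ∈ Finset.range (n + 1), c ^ m * (n.choose m : ℝ) * B (n - m) * Tb b m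
  calc A n ≤ (∑ k ∈ Finset.Icc 1 n, (n.choose k : ℝ) * c ^ k * b * A (n - k)) + B n := hrec n
    _ ≤ (∑ k ∈ Finset.Icc 1 n, (n.choose k : ℝ) * c ^ k * b *
          (∑ m ∈ Finset.range (n - k + 1), c ^ m * ((n - k).choose m : ℝ) * B (n - k - m)
            * Tb b m)) + B n := by
        gcongr with k hk
        · rw [Finset.mem_Icc] at hk
          exact ih (n - k) (by omega)
    _ = ∑ m ∈ Finset.range (n + 1), c ^ m * (n.choose m : ℝ) * B (n - m) * Tb b m := by
        have hsplit : Finset.range (n + 1) = insert 0 (Finset.Icc 1 n) := by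
          ext x; simp; omega
        rw [hsplit, Finset.sum_insert (by simp)]
        have hterm0 : c ^ 0 * ((n.choose 0 : ℕ) : ℝ) * B (n - 0) * Tb b 0 = B n := by
          simp [Tb_zero]
        rw [hterm0, add_comm]
        congr 1
        have hR : ∀ j ∈ Finset.Icc 1 n, c ^ j * (n.choose j : ℝ) * B (n - j) * Tb b j
            = ∑ m ∈ Finset.range j, c ^ j * (n.choose j : ℝ) * B (n - j) * b
                * ((j.choose m : ℝ) * Tb b m) := by
          intro j hj
          rw [Finset.mem_Icc] at hj
          rw [← Tb_rec hj.1, Finset.mul_sum, Finset.mul_sum]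
          apply Finset.sum_congr rfl
          intro m _
          ring
        have hL : ∀ k ∈ Finset.Icc 1 n, (n.choose k : ℝ) * c ^ k * b *
            (∑ m ∈ Finset.range (n - k + 1), c ^ m * ((n - k).choose m : ℝ) * B (n - k - m)
              * Tb b m)
            = ∑ m ∈ Finset.range (n - k + 1), (n.choose k : ℝ) * c ^ k * b *
                (c ^ m * ((n - k).choose m : ℝ) * B (n - k - m) * Tb b m) := by
          intro k _
          rw [Finset.mul_sum]
        rw [Finset.sum_congr rfl hL, Finset.sum_congr rfl hR,
          Finset.sum_sigma', Finset.sum_sigma']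
        refine Finset.sum_nbij' (fun p => ⟨p.1 + p.2, p.2⟩) (fun p => ⟨p.1 - p.2, p.2⟩)
          ?_ ?_ ?_ ?_ ?_
        · rintro ⟨k, m⟩ hp
          simp only [Finset.mem_sigma, Finset.mem_Icc, Finset.mem_range] at hp ⊢
          omega
        · rintro ⟨j, m⟩ hp
          simp only [Finset.mem_sigma, Finset.mem_Icc, Finset.mem_range] at hp ⊢
          omega
        · rintro ⟨k, m⟩ hp
          simp
        · rintro ⟨j, m⟩ hp
          simp only [Finset.mem_sigma, Finset.mem_Icc, Finset.mem_range] at hp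
          simp only [Sigma.mk.inj_iff, heq_eq_eq, and_true]
          omega
        · rintro ⟨k, m⟩ hp
          simp only [Finset.mem_sigma, Finset.mem_Icc, Finset.mem_range] at hp
          obtain ⟨⟨hk1, hkn⟩, hm⟩ := hp
          have hkm : k + m ≤ n := by omega
          have hch : (n.choose k : ℝ) * ((n - k).choose m : ℝ)
              = (n.choose (k + m) : ℝ) * (((k + m).choose m : ℕ) : ℝ) := by
            exact_mod_cast congrArg (Nat.cast : ℕ → ℝ) (choose_split hkn hkm)
          show (n.choose k : ℝ) * c ^ k * b *
              (c ^ m * ((n - k).choose m : ℝ) * B (n - k - m) * Tb b m)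
            = c ^ (k + m) * (n.choose (k + m) : ℝ) * B (n - (k + m)) * b
                * (((k + m).choose m : ℝ) * Tb b m)
          rw [Nat.sub_sub, pow_add]
          calc (n.choose k : ℝ) * c ^ k * b *
              (c ^ m * ((n - k).choose m : ℝ) * B (n - (k + m)) * Tb b m)
              = ((n.choose k : ℝ) * ((n - k).choose m : ℝ)) *
                  (c ^ k * c ^ m * b * B (n - (k + m)) * Tb b m) := by ring
            _ = ((n.choose (k + m) : ℝ) * (((k + m).choose m : ℕ) : ℝ)) *
                  (c ^ k * c ^ m * b * B (n - (k + m)) * Tb b m) := by rw [hch]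
            _ = _ := by ring
end

section
/- For arbitrary sequences of real numbers $(A_\ell)_{\ell\ge0}$ and $(B_k)_{k\ge0}$ and any natural number $\nu$, one has $\sum_{m=0}^{\nu} \sum_{\ell=0}^{m} \sum_{k=0}^{\nu-m} \binom{\nu}{m} A_{\ell} B_{k}\, S(m,\ell)\, S(\nu-m,k) = \sum_{m=0}^{\nu} \Big( \sum_{\ell=0}^{m} \binom{m}{\ell} A_\ell B_{m-\ell} \Big) S(\nu,m)$. -/
open Finset

lemma stirling2_succ_succ (n k : ℕ) :
    stirling2 (n + 1) (k + 1) = (k + 1) * stirling2 n (k + 1) + stirling2 n k := rfl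

lemma stirling2_pos_zero (n : ℕ) : stirling2 (n + 1) 0 = 0 := rfl

lemma stirling2_zero_succ (k : ℕ) : stirling2 0 (k + 1) = 0 := rfl

lemma stirling2_eq_zero_of_lt : ∀ {n k : ℕ}, n < k → stirling2 n k = 0 := by
  intro n
  induction n with
  | zero => intro k h; cases k with
    | zero => omega
    | succ b => rfl
  | succ m ih =>
    intro k h
    cases k with
    | zero => omega
    | succ b =>
      rw [stirling2_succ_succ, ih (by omega), ih (by omega)]; ring

lemma conv_l0 (ν k : ℕ) :
    ∑ m ∈ range (ν + 1), ν.choose m * stirling2 m 0 * stirling2 (ν - m) k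
      = stirling2 ν k := by
  rw [Finset.sum_eq_single 0]
  · simp [stirling2]
  · intro m hm hne
    obtain ⟨m', rfl⟩ := Nat.exists_eq_succ_of_ne_zero hne
    simp [stirling2_pos_zero]
  · intro h; simp at h

lemma conv_k0 (ν l : ℕ) :
    ∑ m ∈ range (ν + 1), ν.choose m * stirling2 m l * stirling2 (ν - m) 0
      = stirling2 ν l := by
  rw [Finset.sum_eq_single ν]
  · simp [stirling2]
  · intro m hm hne
    rw [mem_range] at hm
    have : ∃ j, ν - m = j + 1 := ⟨ν - m - 1, by omega⟩
    obtain ⟨j, hj⟩ := this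
    rw [hj, stirling2_pos_zero, mul_zero]
  · intro h; simp at h

lemma conv : ∀ (ν l k : ℕ),
    ∑ m ∈ range (ν + 1), ν.choose m * stirling2 m l * stirling2 (ν - m) k
      = (l + k).choose l * stirling2 ν (l + k) := by
  intro ν
  induction ν with
  | zero =>
    intro l k
    rcases l with _ | a <;> rcases k with _ | b <;> simp [stirling2]
  | succ ν ih =>
    intro l k
    rcases l with _ | a
    · rw [conv_l0]; simp
    rcases k with _ | b
    · rw [conv_k0]; simp
    -- main case
    have step1 :
        ∑ m ∈ range (ν + 2), (ν+1).choose m * stirling2 m (a+1) * stirling2 (ν+1-m) (b+1)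
          = ∑ m ∈ range (ν + 1),
              (ν.choose m + ν.choose (m+1)) * stirling2 (m+1) (a+1) * stirling2 (ν-m) (b+1) := by
      rw [Finset.sum_range_succ']
      simp only [stirling2_zero_succ, Nat.succ_sub_succ, mul_zero, zero_mul, add_zero,
        Nat.choose_succ_succ]
    -- split into Σ1 + Σ2
    have step2 :
        ∑ m ∈ range (ν + 1),
            (ν.choose m + ν.choose (m+1)) * stirling2 (m+1) (a+1) * stirling2 (ν-m) (b+1)
          = (∑ m ∈ range (ν + 1), ν.choose m * stirling2 (m+1) (a+1) * stirling2 (ν-m) (b+1))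
            + ∑ m ∈ range (ν + 1), ν.choose (m+1) * stirling2 (m+1) (a+1) * stirling2 (ν-m) (b+1) := by
      rw [← Finset.sum_add_distrib]
      exact Finset.sum_congr rfl fun m _ => by ring
    -- Σ1
    have sig1 :
        ∑ m ∈ range (ν + 1), ν.choose m * stirling2 (m+1) (a+1) * stirling2 (ν-m) (b+1)
          = (a+1) * ((a+1+(b+1)).choose (a+1) * stirling2 ν (a+1+(b+1)))
            + (a+(b+1)).choose a * stirling2 ν (a+(b+1)) := by
      rw [← ih (a+1) (b+1), ← ih a (b+1), Finset.mul_sum, ← Finset.sum_add_distrib]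
      exact Finset.sum_congr rfl fun m _ => by rw [stirling2_succ_succ]; ring
    -- Σ2 : shift index
    have sig2a :
        ∑ m ∈ range (ν + 1), ν.choose (m+1) * stirling2 (m+1) (a+1) * stirling2 (ν-m) (b+1)
          = ∑ m ∈ range (ν + 1), ν.choose m * stirling2 m (a+1) * stirling2 (ν+1-m) (b+1) := by
      have h1 := Finset.sum_range_succ'
        (fun m => ν.choose m * stirling2 m (a+1) * stirling2 (ν+1-m) (b+1)) (ν+1)
      have h2 := Finset.sum_range_succ
        (fun m => ν.choose m * stirling2 m (a+1) * stirling2 (ν+1-m) (b+1)) (ν+1)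
      simp only [stirling2_zero_succ, Nat.succ_sub_succ, Nat.choose_succ_self,
        mul_zero, zero_mul, add_zero] at h1 h2
      rw [h1] at h2
      exact h2
    have sig2 :
        ∑ m ∈ range (ν + 1), ν.choose m * stirling2 m (a+1) * stirling2 (ν+1-m) (b+1)
          = (b+1) * ((a+1+(b+1)).choose (a+1) * stirling2 ν (a+1+(b+1)))
            + (a+1+b).choose (a+1) * stirling2 ν (a+1+b) := by
      rw [← ih (a+1) (b+1), ← ih (a+1) b, Finset.mul_sum, ← Finset.sum_add_distrib]
      refine Finset.sum_congr rfl fun m hm => ?_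
      rw [mem_range] at hm
      have : ν + 1 - m = (ν - m) + 1 := by omega
      rw [this, stirling2_succ_succ]
      ring
    rw [step1, step2, sig1, sig2a, sig2]
    -- final arithmetic
    have hsum1 : a + (b+1) = a + b + 1 := by ring
    have hsum2 : a + 1 + b = a + b + 1 := by ring
    have hsum3 : a + 1 + (b+1) = (a+b+1) + 1 := by ring
    rw [hsum1, hsum2, hsum3, stirling2_succ_succ]
    have hpascal : ((a+b+1)+1).choose (a+1) = (a+b+1).choose a + (a+b+1).choose (a+1) :=
      Nat.choose_succ_succ _ _
    rw [hpascal]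
    ring

/-- One-dimensional case of the triple-sum rearrangement identity:
`∑_{m=0}^ν ∑_{ℓ=0}^m ∑_{k=0}^{ν-m} C(ν,m) A_ℓ B_k S(m,ℓ) S(ν-m,k)
  = ∑_{m=0}^ν (∑_{ℓ=0}^m C(m,ℓ) A_ℓ B_{m-ℓ}) S(ν,m)`. -/
theorem stirling2_triple_sum_rearrange (A B : ℕ → ℝ) (ν : ℕ) :
    ∑ m ∈ Finset.range (ν + 1), ∑ ℓ ∈ Finset.range (m + 1),
      ∑ k ∈ Finset.range (ν - m + 1),
        (ν.choose m : ℝ) * A ℓ * B k * stirling2 m ℓ * stirling2 (ν - m) k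
    = ∑ m ∈ Finset.range (ν + 1),
        (∑ ℓ ∈ Finset.range (m + 1), (m.choose ℓ : ℝ) * A ℓ * B (m - ℓ)) *
          stirling2 ν m := by
  -- Step 1: extend inner ranges to range (ν+1)
  have ext1 :
      ∑ m ∈ range (ν + 1), ∑ ℓ ∈ range (m + 1), ∑ k ∈ range (ν - m + 1),
          (ν.choose m : ℝ) * A ℓ * B k * stirling2 m ℓ * stirling2 (ν - m) k
        = ∑ m ∈ range (ν + 1), ∑ ℓ ∈ range (ν + 1), ∑ k ∈ range (ν + 1),
          (ν.choose m : ℝ) * A ℓ * B k * stirling2 m ℓ * stirling2 (ν - m) k := by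
    refine Finset.sum_congr rfl fun m hm => ?_
    rw [mem_range] at hm
    rw [Finset.sum_subset (Finset.range_subset_range.2 (by omega : m + 1 ≤ ν + 1))]
    · refine Finset.sum_congr rfl fun ℓ _ => ?_
      rw [Finset.sum_subset (Finset.range_subset_range.2 (by omega : ν - m + 1 ≤ ν + 1))]
      intro k _ hk
      rw [mem_range] at hk
      rw [stirling2_eq_zero_of_lt (show ν - m < k by omega)]
      push_cast; ring
    · intro ℓ _ hℓ
      rw [mem_range] at hℓ
      rw [stirling2_eq_zero_of_lt (show m < ℓ by omega)]
      simp
  rw [ext1]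
  -- Step 2: swap sums and apply convolution
  rw [Finset.sum_comm]
  have ext2 : ∀ ℓ, ∑ m ∈ range (ν + 1), ∑ k ∈ range (ν + 1),
        (ν.choose m : ℝ) * A ℓ * B k * stirling2 m ℓ * stirling2 (ν - m) k
      = ∑ k ∈ range (ν + 1),
          A ℓ * B k * ((ℓ + k).choose ℓ : ℝ) * stirling2 ν (ℓ + k) := by
    intro ℓ
    rw [Finset.sum_comm]
    refine Finset.sum_congr rfl fun k _ => ?_
    have := conv ν ℓ k
    calc ∑ m ∈ range (ν + 1),
            (ν.choose m : ℝ) * A ℓ * B k * stirling2 m ℓ * stirling2 (ν - m) k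
        = A ℓ * B k * ((∑ m ∈ range (ν + 1),
            ν.choose m * stirling2 m ℓ * stirling2 (ν - m) k : ℕ) : ℝ) := by
          push_cast [Finset.mul_sum]
          exact Finset.sum_congr rfl fun m _ => by ring
      _ = A ℓ * B k * ((ℓ + k).choose ℓ : ℝ) * stirling2 ν (ℓ + k) := by
          rw [this]; push_cast; ring
  simp only [ext2]
  -- Step 3: shrink k-range to ν + 1 - ℓ
  have ext3 : ∑ ℓ ∈ range (ν + 1), ∑ k ∈ range (ν + 1),
        A ℓ * B k * ((ℓ + k).choose ℓ : ℝ) * stirling2 ν (ℓ + k)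
      = ∑ ℓ ∈ range (ν + 1), ∑ k ∈ range (ν + 1 - ℓ),
        A ℓ * B k * ((ℓ + k).choose ℓ : ℝ) * stirling2 ν (ℓ + k) := by
    refine Finset.sum_congr rfl fun ℓ hℓ => ?_
    rw [mem_range] at hℓ
    rw [Finset.sum_subset (Finset.range_subset_range.2 (by omega : ν + 1 - ℓ ≤ ν + 1))]
    intro k _ hk
    rw [mem_range] at hk
    rw [stirling2_eq_zero_of_lt (show ν < ℓ + k by omega)]
    push_cast; ring
  rw [ext3]
  -- Step 4: diagonal flip
  rw [← Finset.sum_range_diag_flip (ν + 1)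
    (fun ℓ k => A ℓ * B k * ((ℓ + k).choose ℓ : ℝ) * stirling2 ν (ℓ + k))]
  -- Step 5: identify with RHS
  refine Finset.sum_congr rfl fun m hm => ?_
  rw [mem_range] at hm
  rw [Finset.sum_mul]
  refine Finset.sum_congr rfl fun ℓ hℓ => ?_
  rw [mem_range] at hℓ
  have h : ℓ + (m - ℓ) = m := by omega
  rw [h]
  ring
end
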